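/- arXiv:1804.04743 — 18 statements merged into one kernel-verified Lean document; each statement's English description precedes it below -/
import Mathlib

section
/- Let S be a regular semigroup. The set of pairs {(x,x') : x ∈ S, x' ∈ V(x)} forms a groupoid whose objects are the idempotents of S, in which (x,x') is a morphism from xx' to x'x, the composite of (x,x') and (y,y') is defined exactly when x'x = yy' and equals (xy, y'x'), the identity morphism at an idempotent e is (e,e), and the inverse of (x,x') is (x',x). In particular: if x' ∈ V(x), y' ∈ V(y) and x'x = yy', then y'x' ∈ V(xy) with (xy)(y'x') = xx' and (y'x')(xy) = y'y; this partial composition is associative where defined; (e,e) composed with (x,x') equals (x,x') whenever e = xx'; and the composite of (x,x') with (x',x) is (xx', xx'). -/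
/-- `x'` is an inverse of `x` in a semigroup: `x·x'·x = x` and `x'·x·x' = x'`. -/
def IsInverse {S : Type*} [Semigroup S] (x x' : S) : Prop :=
  x * x' * x = x ∧ x' * x * x' = x'

/-- extend an equation `a * b = c` to `a * (b * t) = c * t`. -/
theorem ext_eq {S : Type*} [Semigroup S] {a b c : S} (h : a * b = c) (t : S) :
    a * (b * t) = c * t := by
  rw [← mul_assoc, h]

/-- The pairs `(x,x')` with `x' ∈ V(x)` of a regular semigroup `S` form a groupoid:
objects are idempotents of `S`, `(x,x')` is a morphism from `x·x'` to `x'·x`,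
the composite of `(x,x')` and `(y,y')` is defined exactly when `x'·x = y·y'` and
equals `(x·y, y'·x')`, the identity at `e` is `(e,e)`, and the inverse of `(x,x')`
is `(x',x)`. -/
theorem groupoid_of_pairs_of_regular_semigroup {S : Type*} [Semigroup S]
    (hreg : ∀ a : S, ∃ b : S, a * b * a = a ∧ b * a * b = b) :
    -- `(x,x')` is a morphism from the idempotent `x·x'` to the idempotent `x'·x`
    (∀ x x' : S, IsInverse x x' →
      (x * x') * (x * x') = x * x' ∧ (x' * x) * (x' * x) = x' * x) ∧
    -- composition: if `x'·x = y·y'` then `y'·x' ∈ V(x·y)`, and the composite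
    -- `(x·y, y'·x')` goes from `x·x'` to `y'·y`
    (∀ x x' y y' : S, IsInverse x x' → IsInverse y y' → x' * x = y * y' →
      IsInverse (x * y) (y' * x') ∧ (x * y) * (y' * x') = x * x' ∧
        (y' * x') * (x * y) = y' * y) ∧
    -- associativity where defined: the iterated composites are defined and agree
    (∀ x x' y y' z z' : S, IsInverse x x' → IsInverse y y' → IsInverse z z' →
      x' * x = y * y' → y' * y = z * z' →
      (y' * x') * (x * y) = z * z' ∧ x' * x = (y * z) * (z' * y') ∧
      (x * y) * z = x * (y * z) ∧ (z' * y') * x' = z' * (y' * x')) ∧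
    -- identities: `(e,e)` with `e = x·x'` is an idempotent pair composable with
    -- `(x,x')`, and the composite `(e·x, x'·e)` equals `(x,x')`
    (∀ x x' e : S, IsInverse x x' → e = x * x' →
      IsInverse e e ∧ e * e = x * x' ∧ e * x = x ∧ x' * e = x') ∧
    -- inverses: `(x',x)` is a morphism, composable with `(x,x')`, and the
    -- composite `(x·x', x·x')` is the identity at `x·x'`
    (∀ x x' : S, IsInverse x x' →
      IsInverse x' x ∧ IsInverse (x * x') (x * x') ∧
        (x * x') * (x * x') = x * x') := by
  clear hreg
  -- a reusable idempotence fact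
  have idem : ∀ x x' : S, IsInverse x x' →
      (x * x') * (x * x') = x * x' ∧ (x' * x) * (x' * x) = x' * x := by
    intro x x' ⟨hx1, hx2⟩
    simp only [mul_assoc] at hx1 hx2
    constructor <;> simp only [mul_assoc, hx1, hx2]
  -- the composition law
  have comp : ∀ x x' y y' : S, IsInverse x x' → IsInverse y y' → x' * x = y * y' →
      IsInverse (x * y) (y' * x') ∧ (x * y) * (y' * x') = x * x' ∧
        (y' * x') * (x * y) = y' * y := by
    intro x x' y y' ⟨hx1, hx2⟩ ⟨hy1, hy2⟩ h
    simp only [mul_assoc] at hx1 hx2 hy1 hy2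
    have hx1' := ext_eq hx1
    have hx2' := ext_eq hx2
    have hy1' := ext_eq hy1
    have hy2' := ext_eq hy2
    have h' := ext_eq h
    simp only [mul_assoc] at hx1' hx2' hy1' hy2' h'
    refine ⟨⟨?_, ?_⟩, ?_, ?_⟩ <;>
      simp only [mul_assoc, h, h', hx1, hx1', hx2, hx2', hy1, hy1', hy2, hy2'] <;>
      simp only [← h', hx1, hx1', hx2, hx2']
  refine ⟨idem, comp, ?_, ?_, ?_⟩
  · -- associativity
    intro x x' y y' z z' hx hy hz hxy hyz
    refine ⟨?_, ?_, mul_assoc x y z, mul_assoc z' y' x'⟩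
    · rw [(comp x x' y y' hx hy hxy).2.2, hyz]
    · obtain ⟨hy1, hy2⟩ := hy
      simp only [mul_assoc] at hy2
      have hyz' := ext_eq hyz
      simp only [mul_assoc] at hyz'
      simp only [mul_assoc, ← hyz', hy2]
      exact hxy
  · -- identities
    intro x x' e ⟨hx1, hx2⟩ he
    subst he
    refine ⟨⟨?_, ?_⟩, ?_, hx1, by simpa [mul_assoc] using hx2⟩ <;>
      simp only [mul_assoc] at hx1 hx2 ⊢ <;>
      simp only [hx1, hx2]
  · -- inverses
    intro x x' hx
    exact ⟨⟨hx.2, hx.1⟩, ⟨(idem x x' hx).1.symm ▸ (idem x x' hx).1, by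
      simp only [(idem x x' hx).1]⟩, (idem x x' hx).1⟩
end

section
/- The relation ≤ on G = {(x,x') : x ∈ S, x' ∈ V(x)} is a partial order: it is reflexive, antisymmetric (if (x,x') ≤ (y,y') and (y,y') ≤ (x,x') then x = y and x' = y'), and transitive. -/
/-- The order on pairs: `(x,x') ≤ (y,y)` iff `(xx')(yy') = (yy')(xx') = xx'`,
`(x'x)(y'y) = (y'y)(x'x) = x'x`, `x = (xx')·y` and `x' = y'·(xx')`. -/
def ple {S : Type*} [Semigroup S] (x x' y y' : S) : Prop :=
  (x * x') * (y * y') = x * x' ∧ (y * y') * (x * x') = x * x' ∧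
  (x' * x) * (y' * y) = x' * x ∧ (y' * y) * (x' * x) = x' * x ∧
  x = (x * x') * y ∧ x' = y' * (x * x')

/-- The relation `≤` on `G = {(x,x') : x ∈ S, x' ∈ V(x)}` is a partial order:
reflexive, antisymmetric, and transitive. -/
theorem ple_is_partial_order {S : Type*} [Semigroup S]
    (hreg : ∀ a : S, ∃ b : S, a * b * a = a ∧ b * a * b = b) :
    (∀ x x' : S, IsInverse x x' → ple x x' x x') ∧
    (∀ x x' y y' : S, IsInverse x x' → IsInverse y y' →
      ple x x' y y' → ple y y' x x' → x = y ∧ x' = y') ∧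
    (∀ x x' y y' z z' : S, IsInverse x x' → IsInverse y y' → IsInverse z z' →
      ple x x' y y' → ple y y' z z' → ple x x' z z') := by
  refine ⟨?_, ?_, ?_⟩
  · rintro x x' ⟨h1, h2⟩
    have e : (x * x') * (x * x') = x * x' := by
      rw [← mul_assoc, h1]
    have g : (x' * x) * (x' * x) = x' * x := by
      rw [← mul_assoc, h2]
    exact ⟨e, e, g, g, h1.symm, by rw [← mul_assoc]; exact h2.symm⟩
  · rintro x x' y y' ⟨hx1, hx2⟩ ⟨hy1, hy2⟩ ⟨a1, a2, a3, a4, a5, a6⟩ ⟨b1, b2, b3, b4, b5, b6⟩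
    have ef : x * x' = y * y' := a1.symm.trans b2
    have gh : x' * x = y' * y := a3.symm.trans b4
    exact ⟨a5.trans (by rw [ef]; exact hy1),
      a6.trans (by rw [ef, ← mul_assoc]; exact hy2)⟩
  · rintro x x' y y' z z' hx hy hz ⟨a1, a2, a3, a4, a5, a6⟩ ⟨b1, b2, b3, b4, b5, b6⟩
    refine ⟨?_, ?_, ?_, ?_, ?_, ?_⟩
    · calc (x * x') * (z * z') = ((x * x') * (y * y')) * (z * z') := by rw [a1]
        _ = (x * x') * ((y * y') * (z * z')) := by simp only [mul_assoc]
        _ = (x * x') * (y * y') := by rw [b1]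
        _ = x * x' := a1
    · calc (z * z') * (x * x') = (z * z') * ((y * y') * (x * x')) := by rw [a2]
        _ = ((z * z') * (y * y')) * (x * x') := by simp only [mul_assoc]
        _ = (y * y') * (x * x') := by rw [b2]
        _ = x * x' := a2
    · calc (x' * x) * (z' * z) = ((x' * x) * (y' * y)) * (z' * z) := by rw [a3]
        _ = (x' * x) * ((y' * y) * (z' * z)) := by simp only [mul_assoc]
        _ = (x' * x) * (y' * y) := by rw [b3]
        _ = x' * x := a3
    · calc (z' * z) * (x' * x) = (z' * z) * ((y' * y) * (x' * x)) := by rw [a4]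
        _ = ((z' * z) * (y' * y)) * (x' * x) := by simp only [mul_assoc]
        _ = (y' * y) * (x' * x) := by rw [b4]
        _ = x' * x := a4
    · calc x = (x * x') * y := a5
        _ = (x * x') * ((y * y') * z) := by rw [← b5]
        _ = ((x * x') * (y * y')) * z := by simp only [mul_assoc]
        _ = (x * x') * z := by rw [a1]
    · calc x' = y' * (x * x') := a6
        _ = (z' * (y * y')) * (x * x') := by rw [← b6]
        _ = z' * ((y * y') * (x * x')) := by simp only [mul_assoc]
        _ = z' * (x * x') := by rw [a2]
end

section
/- Let u' ∈ V(u), v' ∈ V(v), x' ∈ V(x), y' ∈ V(y) with u'u = vv' and x'x = yy'. If (u,u') ≤ (x,x') and (v,v') ≤ (y,y'), then v'u' ∈ V(uv), y'x' ∈ V(xy), uv = (uu')·(xy), v'u' = (y'x')·(uu'), and (uv, v'u') ≤ (xy, y'x'). (Axiom (OG1) for the ordered groupoid of pairs.) -/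
private lemma prod_left {S : Type*} [Semigroup S] {u u' v v' : S}
    (hu : IsInverse u u') (huv : u' * u = v * v') :
    (u * v) * (v' * u') = u * u' := by
  calc (u * v) * (v' * u') = u * (v * v') * u' := by
        rw [← mul_assoc, mul_assoc u v v']
    _ = u * u' * u * u' := by rw [← huv, ← mul_assoc]
    _ = u * u' := by rw [hu.1]

private lemma prod_right {S : Type*} [Semigroup S] {u u' v v' : S}
    (hv : IsInverse v v') (huv : u' * u = v * v') :
    (v' * u') * (u * v) = v' * v := by
  calc (v' * u') * (u * v) = v' * (u' * u) * v := by
        rw [← mul_assoc, mul_assoc v' u' u]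
    _ = v' * v * v' * v := by rw [huv, ← mul_assoc]
    _ = v' * v := by rw [hv.2]

private lemma prod_inv {S : Type*} [Semigroup S] {u u' v v' : S}
    (hu : IsInverse u u') (hv : IsInverse v v') (huv : u' * u = v * v') :
    IsInverse (u * v) (v' * u') := by
  constructor
  · calc (u * v) * (v' * u') * (u * v) = (u * u') * (u * v) := by
          rw [prod_left hu huv]
      _ = u * v := by rw [← mul_assoc, hu.1]
  · calc (v' * u') * (u * v) * (v' * u') = (v' * v) * (v' * u') := by
          rw [prod_right hv huv]
      _ = v' * u' := by rw [← mul_assoc, hv.2]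

/-- Axiom (OG1) for the ordered groupoid of pairs: the partial order is
compatible with composition. -/
theorem ple_compatible_with_composition {S : Type*} [Semigroup S]
    (hreg : ∀ a : S, ∃ b : S, a * b * a = a ∧ b * a * b = b)
    (u u' v v' x x' y y' : S)
    (hu : IsInverse u u') (hv : IsInverse v v')
    (hx : IsInverse x x') (hy : IsInverse y y')
    (huv : u' * u = v * v') (hxy : x' * x = y * y')
    (h1 : ple u u' x x') (h2 : ple v v' y y') :
    IsInverse (u * v) (v' * u') ∧ IsInverse (x * y) (y' * x') ∧
    u * v = (u * u') * (x * y) ∧ v' * u' = (y' * x') * (u * u') ∧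
    ple (u * v) (v' * u') (x * y) (y' * x') := by
  obtain ⟨h1a, h1b, h1c, h1d, h1e, h1f⟩ := h1
  obtain ⟨h2a, h2b, h2c, h2d, h2e, h2f⟩ := h2
  have kL : (u * v) * (v' * u') = u * u' := prod_left hu huv
  have kR : (v' * u') * (u * v) = v' * v := prod_right hv huv
  have kL' : (x * y) * (y' * x') = x * x' := prod_left hx hxy
  have kR' : (y' * x') * (x * y) = y' * y := prod_right hy hxy
  have key3 : u * v = (u * u') * (x * y) := by
    calc u * v = u * ((v * v') * y) := by rw [← h2e]
      _ = u * (u' * u) * y := by rw [← huv, ← mul_assoc]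
      _ = u * u' * u * y := by rw [← mul_assoc]
      _ = ((u * u') * x) * y := by rw [hu.1, ← h1e]
      _ = (u * u') * (x * y) := by rw [mul_assoc]
  have key4 : v' * u' = (y' * x') * (u * u') := by
    calc v' * u' = (y' * (v * v')) * u' := by rw [← h2f]
      _ = y' * (u' * u) * u' := by rw [← huv, ← mul_assoc]
      _ = y' * (u' * u * u') := by rw [mul_assoc y']
      _ = y' * (x' * (u * u')) := by rw [hu.2]; conv_lhs => rw [h1f]
      _ = (y' * x') * (u * u') := by rw [mul_assoc]
  refine ⟨prod_inv hu hv huv, prod_inv hx hy hxy, key3, key4, ?_, ?_, ?_, ?_, ?_, ?_⟩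
  · rw [kL, kL']; exact h1a
  · rw [kL, kL']; exact h1b
  · rw [kR, kR']; exact h2c
  · rw [kR, kR']; exact h2d
  · rw [kL]; exact key3
  · rw [kL]; exact key4
end

section
/- Let x' ∈ V(x) and y' ∈ V(y). If (x,x') ≤ (y,y'), then (x',x) ≤ (y',y); explicitly, (x'x)(y'y) = (y'y)(x'x) = x'x, (xx')(yy') = (yy')(xx') = xx', x' = (x'x)·y' and x = y·(x'x). (Axiom (OG2) for the ordered groupoid of pairs.) -/
/-- Axiom (OG2) for the ordered groupoid of pairs: the partial order is
compatible with inversion, i.e. `(x,x') ≤ (y,y')` implies `(x',x) ≤ (y',y)`. -/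
theorem ple_compatible_with_inversion {S : Type*} [Semigroup S]
    (hreg : ∀ a : S, ∃ b : S, a * b * a = a ∧ b * a * b = b)
    (x x' y y' : S) (hx : IsInverse x x') (hy : IsInverse y y')
    (h : ple x x' y y') :
    ple x' x y' y ∧
    (x' * x) * (y' * y) = x' * x ∧ (y' * y) * (x' * x) = x' * x ∧
    (x * x') * (y * y') = x * x' ∧ (y * y') * (x * x') = x * x' ∧
    x' = (x' * x) * y' ∧ x = y * (x' * x) := by
  obtain ⟨h1, h2, h3, h4, h5, h6⟩ := h
  obtain ⟨hx1, hx2⟩ := hx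
  have hxy' : x * y' = x * x' := by
    calc x * y' = (x * x' * y) * y' := by rw [← h5]
    _ = (x * x') * (y * y') := by simp [mul_assoc]
    _ = x * x' := h1
  have hyx' : y * x' = x * x' := by
    calc y * x' = y * (y' * (x * x')) := by rw [← h6]
    _ = (y * y') * (x * x') := by simp [mul_assoc]
    _ = x * x' := h2
  have e1 : x' = (x' * x) * y' := by
    calc x' = x' * x * x' := hx2.symm
    _ = x' * (x * y') := by rw [mul_assoc, hxy']
    _ = (x' * x) * y' := by rw [mul_assoc]
  have e2 : x = y * (x' * x) := by
    calc x = x * x' * x := hx1.symm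
    _ = (y * x') * x := by rw [hyx']
    _ = y * (x' * x) := by rw [mul_assoc]
  exact ⟨⟨h3, h4, h1, h2, e1, e2⟩, h3, h4, h1, h2, e1, e2⟩
end

section
/- Let x' ∈ V(x), set e = xx', and let g be an idempotent with ge = eg = g. Then x'g ∈ V(gx), (gx)(x'g) = g, (x'g)(gx) = x'gx, and (gx, x'g) ≤ (x, x'). (The restriction of the morphism (x,x') to g is a well-defined morphism below (x,x').) -/
/-- The restriction of the morphism `(x,x')` to an idempotent `g` lying under
`e = x·x'` is the well-defined morphism `(g·x, x'·g) ≤ (x,x')` from `g` to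
`x'·g·x`. -/
theorem restriction_is_morphism_below {S : Type*} [Semigroup S]
    (hreg : ∀ a : S, ∃ b : S, a * b * a = a ∧ b * a * b = b)
    (x x' g : S) (hx : IsInverse x x') (hg : g * g = g)
    (hge : g * (x * x') = g) (heg : (x * x') * g = g) :
    IsInverse (g * x) (x' * g) ∧
    (g * x) * (x' * g) = g ∧ (x' * g) * (g * x) = x' * g * x ∧
    ple (g * x) (x' * g) x x' := by
  obtain ⟨hx1, hx2⟩ := hx
  have hggA : ∀ a : S, g * (g * a) = g * a := fun a => by rw [← mul_assoc, hg]
  have heg' : x * (x' * g) = g := by rw [← mul_assoc, heg]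
  have hx1' : x * (x' * x) = x := by rw [← mul_assoc, hx1]
  have hx2' : x' * (x * x') = x' := by rw [← mul_assoc, hx2]
  have hgeA : ∀ a : S, g * (x * (x' * a)) = g * a := fun a => by
    rw [← mul_assoc x, ← mul_assoc g, hge]
  have hegA : ∀ a : S, x * (x' * (g * a)) = g * a := fun a => by
    rw [← mul_assoc x', ← mul_assoc x, heg']
  have hge' : g * (x * x') = g := hge
  have hx1A : ∀ a : S, x * (x' * (x * a)) = x * a := fun a => by
    rw [← mul_assoc x', ← mul_assoc x, hx1']
  have hx2A : ∀ a : S, x' * (x * (x' * a)) = x' * a := fun a => by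
    rw [← mul_assoc x, ← mul_assoc x', hx2']
  refine ⟨⟨?_, ?_⟩, ?_, ?_, ?_, ?_, ?_, ?_, ?_, ?_⟩ <;>
    simp only [mul_assoc, hggA, hgeA, hegA, heg', hge', hx1A, hx2A, hx1', hx2', hg]
end

section
/- Let x' ∈ V(x), set f = x'x, and let h be an idempotent with hf = fh = h. Then hx' ∈ V(xh), (hx')(xh) = h, (xh)(hx') = xhx', and (xh, hx') ≤ (x, x'). (The corestriction of the morphism (x,x') to h is a well-defined morphism below (x,x').) -/
/-- The corestriction of the morphism `(x,x')` to an idempotent `h` lying under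
`f = x'·x` is the well-defined morphism `(x·h, h·x') ≤ (x,x')` from `x·h·x'`
to `h`. -/
theorem corestriction_is_morphism_below {S : Type*} [Semigroup S]
    (hreg : ∀ a : S, ∃ b : S, a * b * a = a ∧ b * a * b = b)
    (x x' h : S) (hx : IsInverse x x') (hh : h * h = h)
    (hhf : h * (x' * x) = h) (hfh : (x' * x) * h = h) :
    IsInverse (x * h) (h * x') ∧
    (h * x') * (x * h) = h ∧ (x * h) * (h * x') = x * h * x' ∧
    ple (x * h) (h * x') x x' := by
  obtain ⟨hx1, hx2⟩ := hx
  have key : h * x' * (x * h) = h := by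
    have : h * x' * (x * h) = h * (x' * x) * h := by simp [mul_assoc]
    rw [this, hhf, hh]
  have keq : x * h * (h * x') = x * h * x' := by
    have : x * h * (h * x') = x * (h * h) * x' := by simp [mul_assoc]
    rw [this, hh]
  have hinv : IsInverse (x * h) (h * x') := by
    constructor
    · have : x * h * (h * x') * (x * h) = x * (h * (h * (x' * (x * h)))) := by
        simp [mul_assoc]
      rw [this]
      have h2 : x' * (x * h) = h := by rw [← mul_assoc, hfh]
      rw [h2, hh, hh]
    · have : h * x' * (x * h) * (h * x') = (h * x' * (x * h)) * (h * x') := rfl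
      rw [this, key, ← mul_assoc, hh]
  refine ⟨hinv, key, keq, ?_, ?_, ?_, ?_, ?_, ?_⟩
  · -- (xh*hx')*(x*x') = xh*hx'
    rw [keq]
    have : x * h * x' * (x * x') = x * h * (x' * x * x') := by simp [mul_assoc]
    rw [this, hx2]
  · rw [keq]
    have : x * x' * (x * h * x') = x * x' * x * (h * x') := by simp [mul_assoc]
    rw [this, hx1, mul_assoc]
  · rw [key]
    exact hhf
  · rw [key]
    exact hfh
  · rw [keq]
    have : x * h * x' * x = x * (h * (x' * x)) := by simp [mul_assoc]
    rw [this, hhf]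
  · rw [keq]
    have : x' * (x * h * x') = x' * x * h * x' := by simp [mul_assoc]
    rw [this, hfh]
end

section
/- Let (e₀, e₁, …, e_n) be an E-chain in a semigroup S, and set w = e₀·e₁⋯e_n and w' = e_n·e_{n-1}⋯e₁·e₀. Then w·w' = e₀, w'·w = e_n, and w' ∈ V(w) (i.e. w·w'·w = w and w'·w·w' = w'). Hence the evaluation ε_Γ of an E-chain is a morphism in the groupoid of pairs from e₀ to e_n. -/
/-- `fwdProd e n = e 0 * e 1 * ⋯ * e n`. -/
def fwdProd {S : Type*} [Semigroup S] (e : ℕ → S) : ℕ → S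
  | 0 => e 0
  | n + 1 => fwdProd e n * e (n + 1)

/-- `bwdProd e n = e n * e (n-1) * ⋯ * e 0`. -/
def bwdProd {S : Type*} [Semigroup S] (e : ℕ → S) : ℕ → S
  | 0 => e 0
  | n + 1 => e (n + 1) * bwdProd e n

private lemma fwd_mul_last {S : Type*} [Semigroup S] (e : ℕ → S) (n : ℕ)
    (h : e n * e n = e n) : fwdProd e n * e n = fwdProd e n := by
  cases n with
  | zero => exact h
  | succ m => show fwdProd e m * e (m+1) * e (m+1) = _
              rw [mul_assoc, h]
              rfl

private lemma last_mul_bwd {S : Type*} [Semigroup S] (e : ℕ → S) (n : ℕ)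
    (h : e n * e n = e n) : e n * bwdProd e n = bwdProd e n := by
  cases n with
  | zero => exact h
  | succ m => show e (m+1) * (e (m+1) * bwdProd e m) = _
              rw [← mul_assoc, h]
              rfl

private lemma first_mul_fwd {S : Type*} [Semigroup S] (e : ℕ → S) (n : ℕ)
    (h : e 0 * e 0 = e 0) : e 0 * fwdProd e n = fwdProd e n := by
  induction n with
  | zero => exact h
  | succ m ih => show e 0 * (fwdProd e m * e (m+1)) = _
                 rw [← mul_assoc, ih]
                 rfl

private lemma bwd_mul_first {S : Type*} [Semigroup S] (e : ℕ → S) (n : ℕ)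
    (h : e 0 * e 0 = e 0) : bwdProd e n * e 0 = bwdProd e n := by
  induction n with
  | zero => exact h
  | succ m ih => show e (m+1) * bwdProd e m * e 0 = _
                 rw [mul_assoc, ih]
                 rfl

private lemma echain_key {S : Type*} [Semigroup S]
    (e : ℕ → S) (n : ℕ)
    (hidem : ∀ i ≤ n, e i * e i = e i)
    (hchain : ∀ i < n,
      (e i * e (i + 1) = e (i + 1) ∧ e (i + 1) * e i = e i) ∨
      (e i * e (i + 1) = e i ∧ e (i + 1) * e i = e (i + 1))) :
    fwdProd e n * bwdProd e n = e 0 ∧ bwdProd e n * fwdProd e n = e n := by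
  induction n with
  | zero => exact ⟨hidem 0 le_rfl, hidem 0 le_rfl⟩
  | succ m ih =>
    obtain ⟨h1, h2⟩ := ih (fun i hi => hidem i (hi.trans (Nat.le_succ m)))
      (fun i hi => hchain i (hi.trans (Nat.lt_succ_self m)))
    have hm1 : e (m+1) * e (m+1) = e (m+1) := hidem (m+1) le_rfl
    have hfb : fwdProd e (m+1) * bwdProd e (m+1)
        = fwdProd e m * e (m+1) * bwdProd e m := by
      show fwdProd e m * e (m+1) * (e (m+1) * bwdProd e m) = _
      rw [mul_assoc (fwdProd e m) (e (m+1)), ← mul_assoc (e (m+1)), hm1]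
      rw [mul_assoc]
    have hbf : bwdProd e (m+1) * fwdProd e (m+1)
        = e (m+1) * e m * e (m+1) := by
      show e (m+1) * bwdProd e m * (fwdProd e m * e (m+1)) = _
      rw [mul_assoc (e (m+1)), ← mul_assoc (bwdProd e m), h2, ← mul_assoc]
    rcases hchain m (Nat.lt_succ_self m) with ⟨hR1, hR2⟩ | ⟨hL1, hL2⟩
    · constructor
      · rw [hfb]
        have : e (m+1) * bwdProd e m = e (m+1) * (e m * bwdProd e m) := by
          rw [last_mul_bwd e m (hidem m (Nat.le_succ m))]
        rw [mul_assoc, this, ← mul_assoc (e (m+1)), hR2, ← mul_assoc,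
          fwd_mul_last e m (hidem m (Nat.le_succ m)), h1]
      · rw [hbf, hR2, hR1]
    · constructor
      · rw [hfb]
        have : fwdProd e m * e (m+1) = fwdProd e m * (e m * e (m+1)) := by
          rw [← mul_assoc, fwd_mul_last e m (hidem m (Nat.le_succ m))]
        rw [this, hL1, fwd_mul_last e m (hidem m (Nat.le_succ m)), h1]
      · rw [hbf, hL2, hm1]

/-- If `(e₀, e₁, …, eₙ)` is an E-chain in a semigroup `S` (each `eᵢ` idempotent
and consecutive entries `R`-related or `L`-related), then with
`w = e₀·e₁⋯eₙ` and `w' = eₙ·e_{n-1}⋯e₁·e₀` one has `w·w' = e₀`, `w'·w = eₙ`,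
and `w' ∈ V(w)`. -/
theorem echain_evaluation_is_morphism {S : Type*} [Semigroup S]
    (e : ℕ → S) (n : ℕ)
    (hidem : ∀ i ≤ n, e i * e i = e i)
    (hchain : ∀ i < n,
      (e i * e (i + 1) = e (i + 1) ∧ e (i + 1) * e i = e i) ∨
      (e i * e (i + 1) = e i ∧ e (i + 1) * e i = e (i + 1))) :
    fwdProd e n * bwdProd e n = e 0 ∧
    bwdProd e n * fwdProd e n = e n ∧
    fwdProd e n * bwdProd e n * fwdProd e n = fwdProd e n ∧
    bwdProd e n * fwdProd e n * bwdProd e n = bwdProd e n := by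
  obtain ⟨h1, h2⟩ := echain_key e n hidem hchain
  refine ⟨h1, h2, ?_, ?_⟩
  · rw [h1, first_mul_fwd e n (hidem 0 (Nat.zero_le n))]
  · rw [h2, last_mul_bwd e n (hidem n le_rfl)]
end

section
/- Let (e₀, e₁, …, e_n) be an E-chain in a semigroup S and let h be an idempotent with h·e₀ = e₀·h = h. Define h₀ = h and h_i = e_i·h_{i-1}·e_i for 1 ≤ i ≤ n. Then h₀·h₁·h₂⋯h_n = h·e₀·e₁⋯e_n and h_n·h_{n-1}⋯h₁·h₀ = e_n·e_{n-1}⋯e₁·e₀·h. (Evaluation of E-chains is compatible with restriction: ε_Γ(h↓c) = h↓ε_Γ(c).) -/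
/-- The restricted sequence: `h₀ = h` and `hᵢ = eᵢ·h_{i-1}·eᵢ` for `i ≥ 1`. -/
def hSeq {S : Type*} [Semigroup S] (e : ℕ → S) (h : S) : ℕ → S
  | 0 => h
  | i + 1 => e (i + 1) * hSeq e h i * e (i + 1)

/-- Evaluation of E-chains is compatible with restriction: if `(e₀, …, eₙ)` is
an E-chain and `h` is an idempotent with `h·e₀ = e₀·h = h`, then with
`h₀ = h`, `hᵢ = eᵢ·h_{i-1}·eᵢ` one has `h₀·h₁⋯hₙ = h·e₀·e₁⋯eₙ` and
`hₙ·h_{n-1}⋯h₁·h₀ = eₙ·e_{n-1}⋯e₁·e₀·h`. -/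
theorem echain_evaluation_compatible_with_restriction {S : Type*} [Semigroup S]
    (e : ℕ → S) (n : ℕ) (h : S)
    (hidem : ∀ i ≤ n, e i * e i = e i)
    (hchain : ∀ i < n,
      (e i * e (i + 1) = e (i + 1) ∧ e (i + 1) * e i = e i) ∨
      (e i * e (i + 1) = e i ∧ e (i + 1) * e i = e (i + 1)))
    (hh : h * h = h) (hhe : h * e 0 = h) (heh : e 0 * h = h) :
    fwdProd (hSeq e h) n = h * fwdProd e n ∧
    bwdProd (hSeq e h) n = bwdProd e n * h := by
  suffices H : ∀ i, i ≤ n →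
      ((hSeq e h i * hSeq e h i = hSeq e h i ∧
        e i * hSeq e h i = hSeq e h i ∧
        hSeq e h i * e i = hSeq e h i) ∧
       (fwdProd e i * e i = fwdProd e i ∧
        e i * bwdProd e i = bwdProd e i) ∧
       (fwdProd (hSeq e h) i * hSeq e h i = fwdProd (hSeq e h) i ∧
        hSeq e h i * bwdProd (hSeq e h) i = bwdProd (hSeq e h) i) ∧
       (fwdProd (hSeq e h) i = h * fwdProd e i ∧
        bwdProd (hSeq e h) i = bwdProd e i * h)) by
    exact (H n le_rfl).2.2.2
  intro i
  induction i with
  | zero =>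
    intro _
    have h0 := hidem 0 (Nat.zero_le n)
    exact ⟨⟨hh, heh, hhe⟩, ⟨h0, h0⟩, ⟨hh, hh⟩, ⟨hhe.symm, heh.symm⟩⟩
  | succ i ih =>
    intro hn
    have hin : i ≤ n := Nat.le_of_succ_le hn
    have hlt : i < n := hn
    obtain ⟨⟨Hii, Hei, Hie⟩, ⟨Hfe, Heb⟩, ⟨Hfh, Hhb⟩, ⟨Hf, Hb⟩⟩ := ih hin
    have ei1 : e (i+1) * e (i+1) = e (i+1) := hidem (i+1) hn
    have Hfe1 : fwdProd e (i+1) * e (i+1) = fwdProd e (i+1) := by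
      simp only [fwdProd]
      rw [mul_assoc, ei1]
    have Heb1 : e (i+1) * bwdProd e (i+1) = bwdProd e (i+1) := by
      simp only [bwdProd]
      rw [← mul_assoc, ei1]
    rcases hchain i hlt with ⟨hc1, hc2⟩ | ⟨hc1, hc2⟩
    · -- R case: e i * e (i+1) = e (i+1), e (i+1) * e i = e i
      have key1 : e (i+1) * hSeq e h i = hSeq e h i := by
        conv_lhs => rw [← Hei, ← mul_assoc, hc2, Hei]
      have keyH : hSeq e h (i+1) = hSeq e h i * e (i+1) := by
        show e (i+1) * hSeq e h i * e (i+1) = _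
        rw [key1]
      have Hii1 : hSeq e h (i+1) * hSeq e h (i+1) = hSeq e h (i+1) := by
        rw [keyH, mul_assoc, ← mul_assoc (e (i+1)), key1, ← mul_assoc, Hii]
      have Hei1 : e (i+1) * hSeq e h (i+1) = hSeq e h (i+1) := by
        rw [keyH, ← mul_assoc, key1]
      have Hie1 : hSeq e h (i+1) * e (i+1) = hSeq e h (i+1) := by
        rw [keyH, mul_assoc, ei1]
      have Hfh1 : fwdProd (hSeq e h) (i+1) * hSeq e h (i+1) = fwdProd (hSeq e h) (i+1) := by
        simp only [fwdProd]
        rw [mul_assoc, Hii1]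
      have Hhb1 : hSeq e h (i+1) * bwdProd (hSeq e h) (i+1) = bwdProd (hSeq e h) (i+1) := by
        simp only [bwdProd]
        rw [← mul_assoc, Hii1]
      have Hf1 : fwdProd (hSeq e h) (i+1) = h * fwdProd e (i+1) := by
        simp only [fwdProd]
        rw [keyH, ← mul_assoc, Hfh, Hf, mul_assoc]
      have Hb1 : bwdProd (hSeq e h) (i+1) = bwdProd e (i+1) * h := by
        simp only [bwdProd]
        have e1G : e (i+1) * bwdProd e i = bwdProd e i := by
          conv_lhs => rw [← Heb, ← mul_assoc, hc2, Heb]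
        have e1B : e (i+1) * bwdProd (hSeq e h) i = bwdProd (hSeq e h) i := by
          conv_lhs => rw [← Hhb, ← mul_assoc, key1, Hhb]
        rw [e1G, keyH, mul_assoc, e1B, Hhb, Hb]
      exact ⟨⟨Hii1, Hei1, Hie1⟩, ⟨Hfe1, Heb1⟩, ⟨Hfh1, Hhb1⟩, ⟨Hf1, Hb1⟩⟩
    · -- L case: e i * e (i+1) = e i, e (i+1) * e i = e (i+1)
      have key2 : hSeq e h i * e (i+1) = hSeq e h i := by
        conv_lhs => rw [← Hie, mul_assoc, hc1, Hie]
      have keyH : hSeq e h (i+1) = e (i+1) * hSeq e h i := by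
        show e (i+1) * hSeq e h i * e (i+1) = _
        rw [mul_assoc, key2]
      have Hii1 : hSeq e h (i+1) * hSeq e h (i+1) = hSeq e h (i+1) := by
        rw [keyH, mul_assoc, ← mul_assoc (hSeq e h i), key2, Hii]
      have Hei1 : e (i+1) * hSeq e h (i+1) = hSeq e h (i+1) := by
        rw [keyH, ← mul_assoc, ei1]
      have Hie1 : hSeq e h (i+1) * e (i+1) = hSeq e h (i+1) := by
        rw [keyH, mul_assoc, key2]
      have Hfh1 : fwdProd (hSeq e h) (i+1) * hSeq e h (i+1) = fwdProd (hSeq e h) (i+1) := by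
        simp only [fwdProd]
        rw [mul_assoc, Hii1]
      have Hhb1 : hSeq e h (i+1) * bwdProd (hSeq e h) (i+1) = bwdProd (hSeq e h) (i+1) := by
        simp only [bwdProd]
        rw [← mul_assoc, Hii1]
      have Fe : fwdProd e i * e (i+1) = fwdProd e i := by
        conv_lhs => rw [← Hfe, mul_assoc, hc1, Hfe]
      have Hf1 : fwdProd (hSeq e h) (i+1) = h * fwdProd e (i+1) := by
        simp only [fwdProd]
        rw [Fe, keyH, Hf, ← mul_assoc, mul_assoc h, Fe, ← Hf, Hfh, Hf]
      have Hb1 : bwdProd (hSeq e h) (i+1) = bwdProd e (i+1) * h := by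
        simp only [bwdProd]
        rw [keyH, mul_assoc, Hhb, Hb, ← mul_assoc]
      exact ⟨⟨Hii1, Hei1, Hie1⟩, ⟨Hfe1, Heb1⟩, ⟨Hfh1, Hhb1⟩, ⟨Hf1, Hb1⟩⟩
end

section
/- Let S be a regular semigroup, x' ∈ V(x), e = xx'. Let e₁, e₂ be idempotents with e_i·e = e·e_i = e_i for i = 1,2, and set f_i = x'·e_i·x. Then each f_i is idempotent; if moreover e₂·e₁ = e₁, then f₂·f₁ = f₁ and e₁·e₂·x = (e₁·x)·(x'·e₁·x)·(x'·e₂·x). (Verification of axiom (IG1) for the inductive groupoid constructed from the cross-connection of S.) -/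
/-- Verification of axiom (IG1) for the inductive groupoid constructed from the
cross-connection of a regular semigroup `S`: with `x' ∈ V(x)`, `e = x·x'`,
idempotents `e₁, e₂ ω e`, and `fᵢ = x'·eᵢ·x`, each `fᵢ` is idempotent, and if
`e₂·e₁ = e₁` (i.e. `e₁ ωʳ e₂`) then `f₂·f₁ = f₁` and
`e₁·e₂·x = (e₁·x)·(x'·e₁·x)·(x'·e₂·x)`. -/
theorem IG1_for_cross_connection_groupoid {S : Type*} [Semigroup S]
    (hreg : ∀ a : S, ∃ b : S, a * b * a = a ∧ b * a * b = b)
    (x x' e₁ e₂ : S) (hx : IsInverse x x')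
    (h₁ : e₁ * e₁ = e₁) (h₂ : e₂ * e₂ = e₂)
    (h₁e : e₁ * (x * x') = e₁) (he₁ : (x * x') * e₁ = e₁)
    (h₂e : e₂ * (x * x') = e₂) (he₂ : (x * x') * e₂ = e₂) :
    (x' * e₁ * x) * (x' * e₁ * x) = x' * e₁ * x ∧
    (x' * e₂ * x) * (x' * e₂ * x) = x' * e₂ * x ∧
    (e₂ * e₁ = e₁ →
      (x' * e₂ * x) * (x' * e₁ * x) = x' * e₁ * x ∧
      e₁ * e₂ * x = (e₁ * x) * (x' * e₁ * x) * (x' * e₂ * x)) := by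
  have key : ∀ a b : S, a * (x * x') = a →
      (x' * a * x) * (x' * b * x) = x' * (a * b) * x := by
    intro a b ha
    calc (x' * a * x) * (x' * b * x)
        = x' * (a * (x * x') * b) * x := by simp only [mul_assoc]
      _ = x' * (a * b) * x := by rw [ha]
  refine ⟨?_, ?_, ?_⟩
  · rw [key e₁ e₁ h₁e, h₁]
  · rw [key e₂ e₂ h₂e, h₂]
  · intro h21
    constructor
    · rw [key e₂ e₁ h₂e, h21]
    · refine Eq.symm ?_
      calc (e₁ * x) * (x' * e₁ * x) * (x' * e₂ * x)
          = e₁ * ((x * x') * e₁) * ((x * x') * e₂) * x := by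
            simp only [mul_assoc]
        _ = e₁ * e₁ * e₂ * x := by rw [he₁, he₂]
        _ = e₁ * e₂ * x := by rw [h₁]
end

section
/- Let e, g, h be idempotents of a semigroup S with e·g = g, e·h = h, g·h = g and h·g = h (a column-singular E-square). Then g·e and h·e are idempotents, h ∈ V(g·e), and the two composite evaluations coincide: (g·h)·(h·(h·e)) = (g·(g·e))·((g·e)·(h·e)) = g·e, and ((h·e)·h)·(h·g) = ((h·e)·(g·e))·((g·e)·g) = h. Hence every column-singular E-square is ε_Γ-commutative (axiom (IG2)). -/
/-- Axiom (IG2): every column-singular E-square is `ε_Γ`-commutative.  For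
idempotents `e, g, h` with `e·g = g`, `e·h = h` (i.e. `g, h ∈ ωʳ(e)`),
`g·h = g` and `h·g = h` (i.e. `g L h`): `g·e` and `h·e` are idempotents,
`h ∈ V(g·e)`, and the composite evaluations along the two sides of the square
`[g, g·e; h, h·e]` agree:
`(g·h)·(h·(h·e)) = (g·(g·e))·((g·e)·(h·e)) = g·e` and
`((h·e)·h)·(h·g) = ((h·e)·(g·e))·((g·e)·g) = h`. -/
theorem column_singular_esquare_commutes {S : Type*} [Semigroup S]
    (e g h : S) (he : e * e = e) (hg : g * g = g) (hh : h * h = h)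
    (heg : e * g = g) (heh : e * h = h)
    (hgh : g * h = g) (hhg : h * g = h) :
    (g * e) * (g * e) = g * e ∧ (h * e) * (h * e) = h * e ∧
    IsInverse (g * e) h ∧
    (g * h) * (h * (h * e)) = g * e ∧
    (g * (g * e)) * ((g * e) * (h * e)) = g * e ∧
    ((h * e) * h) * (h * g) = h ∧
    ((h * e) * (g * e)) * ((g * e) * g) = h := by
  have a1 : ∀ x : S, e * (g * x) = g * x := fun x => by rw [← mul_assoc, heg]
  have a2 : ∀ x : S, e * (h * x) = h * x := fun x => by rw [← mul_assoc, heh]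
  have a3 : ∀ x : S, g * (h * x) = g * x := fun x => by rw [← mul_assoc, hgh]
  have a4 : ∀ x : S, h * (g * x) = h * x := fun x => by rw [← mul_assoc, hhg]
  have a5 : ∀ x : S, g * (g * x) = g * x := fun x => by rw [← mul_assoc, hg]
  have a6 : ∀ x : S, h * (h * x) = h * x := fun x => by rw [← mul_assoc, hh]
  have a7 : ∀ x : S, e * (e * x) = e * x := fun x => by rw [← mul_assoc, he]
  refine ⟨?_, ?_, ⟨?_, ?_⟩, ?_, ?_, ?_, ?_⟩ <;>
    simp [mul_assoc, a1, a2, a3, a4, a5, a6, a7, he, hg, hh, heg, heh, hgh, hhg]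
end

section
/- Let S be a regular semigroup and T = {(e,u,f) : e, f ∈ E(S), e·u = u = u·f}. The relation ∼ on T defined by (e,u,f) ∼ (g,v,h) iff e L g, f L h and u = e·v, is an equivalence relation. -/
/-- Green's `L` relation on idempotents: `e L g` iff `e·g = e` and `g·e = g`. -/
def LRel {S : Type*} [Semigroup S] (e g : S) : Prop := e * g = e ∧ g * e = g

/-- The set `T = {(e,u,f) : e, f ∈ E(S), e·u = u = u·f}` of triples. -/
def TSet (S : Type*) [Semigroup S] : Set (S × S × S) :=
  {t | t.1 * t.1 = t.1 ∧ t.2.2 * t.2.2 = t.2.2 ∧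
       t.1 * t.2.1 = t.2.1 ∧ t.2.1 * t.2.2 = t.2.1}

/-- The relation `∼` on triples: `(e,u,f) ∼ (g,v,h)` iff `e L g`, `f L h`
and `u = e·v`. -/
def simRel {S : Type*} [Semigroup S] (a b : S × S × S) : Prop :=
  LRel a.1 b.1 ∧ LRel a.2.2 b.2.2 ∧ a.2.1 = a.1 * b.2.1

/-- For a regular semigroup `S`, the relation `∼` on
`T = {(e,u,f) : e, f ∈ E(S), e·u = u = u·f}` defined by
`(e,u,f) ∼ (g,v,h)` iff `e L g`, `f L h` and `u = e·v`, is an equivalence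
relation. -/
theorem simRel_is_equivalence {S : Type*} [Semigroup S]
    (hreg : ∀ a : S, ∃ b : S, a * b * a = a ∧ b * a * b = b) :
    Equivalence (fun a b : TSet S => simRel a.val b.val) := by
  constructor
  · rintro ⟨⟨e,u,f⟩, he, hf, heu, huf⟩
    exact ⟨⟨he, he⟩, ⟨hf, hf⟩, heu.symm⟩
  · rintro ⟨⟨e,u,f⟩, he, hf, heu, huf⟩ ⟨⟨g,v,h⟩, hg, hh, hgv, hvh⟩
      ⟨⟨heg, hge⟩, ⟨hfh, hhf⟩, huev⟩
    simp only at heg hge hfh hhf huev hgv heu ⊢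
    refine ⟨⟨hge, heg⟩, ⟨hhf, hfh⟩, ?_⟩
    calc v = g * v := hgv.symm
      _ = (g * e) * v := by rw [hge]
      _ = g * (e * v) := mul_assoc ..
      _ = g * u := by rw [← huev]
  · rintro ⟨⟨e,u,f⟩, he, hf, heu, huf⟩ ⟨⟨g,v,h⟩, hg, hh, hgv, hvh⟩
      ⟨⟨i,w,j⟩, hi, hj, hiw, hwj⟩
      ⟨⟨heg, hge⟩, ⟨hfh, hhf⟩, huev⟩ ⟨⟨hgi, hig⟩, ⟨hhj, hjh⟩, hvgw⟩
    simp only at heg hge hfh hhf huev hgi hig hhj hjh hvgw ⊢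
    refine ⟨⟨?_, ?_⟩, ⟨?_, ?_⟩, ?_⟩
    · calc e * i = (e * g) * i := by rw [heg]
        _ = e * (g * i) := mul_assoc ..
        _ = e * g := by rw [hgi]
        _ = e := heg
    · calc i * e = (i * g) * e := by rw [hig]
        _ = i * (g * e) := mul_assoc ..
        _ = i * g := by rw [hge]
        _ = i := hig
    · calc f * j = (f * h) * j := by rw [hfh]
        _ = f * (h * j) := mul_assoc ..
        _ = f * h := by rw [hhj]
        _ = f := hfh
    · calc j * f = (j * h) * f := by rw [hjh]
        _ = j * (h * f) := mul_assoc ..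
        _ = j * h := by rw [hhf]
        _ = j := hjh
    · calc u = e * v := huev
        _ = e * (g * w) := by rw [hvgw]
        _ = (e * g) * w := (mul_assoc ..).symm
        _ = e * w := by rw [heg]
end

section
/- Let S be a regular semigroup and T = {(e,u,f) : e, f ∈ E(S), e·u = u = u·f} with the equivalence ∼. Composition is well defined on ∼-classes: if (e,u,f) ∼ (e₁,u₁,f₁), (g,v,k) ∼ (g₁,v₁,k₁), and f L g, then f₁ L g₁, e·(u·v) = u·v, (u·v)·k = u·v, and (e, u·v, k) ∼ (e₁, u₁·v₁, k₁). -/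
/-- Composition is well defined on `∼`-classes: if `(e,u,f) ∼ (e₁,u₁,f₁)`,
`(g,v,k) ∼ (g₁,v₁,k₁)` and `f L g`, then `f₁ L g₁`, `e·(u·v) = u·v`,
`(u·v)·k = u·v` and `(e, u·v, k) ∼ (e₁, u₁·v₁, k₁)`. -/
theorem composition_well_defined {S : Type*} [Semigroup S]
    (hreg : ∀ a : S, ∃ b : S, a * b * a = a ∧ b * a * b = b)
    (e u f e₁ u₁ f₁ g v k g₁ v₁ k₁ : S)
    (hT1 : (e, u, f) ∈ TSet S) (hT2 : (e₁, u₁, f₁) ∈ TSet S)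
    (hT3 : (g, v, k) ∈ TSet S) (hT4 : (g₁, v₁, k₁) ∈ TSet S)
    (h12 : simRel (e, u, f) (e₁, u₁, f₁))
    (h34 : simRel (g, v, k) (g₁, v₁, k₁))
    (hfg : LRel f g) :
    LRel f₁ g₁ ∧ e * (u * v) = u * v ∧ (u * v) * k = u * v ∧
    simRel (e, u * v, k) (e₁, u₁ * v₁, k₁) := by
  obtain ⟨hee, hff, heu, huf⟩ := hT1
  obtain ⟨he1, hf1, he1u, hu1f⟩ := hT2
  obtain ⟨hgg, hkk, hgv, hvk⟩ := hT3
  obtain ⟨hg1, hk1, hg1v, hv1k⟩ := hT4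
  obtain ⟨⟨hee1, he1e⟩, ⟨hff1, hf1f⟩, hueu⟩ := h12
  obtain ⟨⟨hgg1, hg1g⟩, ⟨hkk1, hk1k⟩, hvgv⟩ := h34
  obtain ⟨hfgf, hgfg⟩ := hfg
  simp only at *
  have hLf1g1 : LRel f₁ g₁ := by
    constructor
    · calc f₁ * g₁ = (f₁ * f) * g₁ := by rw [hf1f]
      _ = f₁ * (f * g₁) := by rw [mul_assoc]
      _ = f₁ * ((f * g) * g₁) := by rw [hfgf]
      _ = f₁ * (f * (g * g₁)) := by rw [mul_assoc]
      _ = f₁ := by rw [hgg1, hfgf, hf1f]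
    · calc g₁ * f₁ = (g₁ * g) * f₁ := by rw [hg1g]
      _ = g₁ * (g * f₁) := by rw [mul_assoc]
      _ = g₁ * ((g * f) * f₁) := by rw [hgfg]
      _ = g₁ * (g * (f * f₁)) := by rw [mul_assoc]
      _ = g₁ := by rw [hff1, hgfg, hg1g]
  have hug : u * g = u := by
    calc u * g = (u * f) * g := by rw [huf]
    _ = u * (f * g) := by rw [mul_assoc]
    _ = u := by rw [hfgf, huf]
  refine ⟨hLf1g1, ?_, ?_, ⟨hee1, he1e⟩, ⟨hkk1, hk1k⟩, ?_⟩
  · rw [← mul_assoc, heu]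
  · rw [mul_assoc, hvk]
  · calc u * v = u * (g * v₁) := by rw [← hvgv]
    _ = (u * g) * v₁ := by rw [mul_assoc]
    _ = u * v₁ := by rw [hug]
    _ = (e * u₁) * v₁ := by rw [← hueu]
    _ = e * (u₁ * v₁) := by rw [mul_assoc]
end

section
/- Let S be a regular semigroup. The quotient 𝓛_G of T = {(e,u,f) : e, f ∈ E(S), e·u = u = u·f} by ∼ forms a category: its objects are the L-classes of idempotents of S, the ∼-class [(e,u,f)] is a morphism from the L-class of e to the L-class of f, composition is [(e,u,f)]·[(g,v,k)] = [(e, u·v, k)] whenever f L g (this is well defined and associative), and [(e,e,e)] is the identity morphism at the L-class of e. Moreover, for fixed idempotents e, f the map u ↦ [(e,u,f)] is a bijection from e·S·f = {u : eu = u = uf} onto the set of morphisms from the L-class of e to the L-class of f. -/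
/-- The quotient `𝓛_G` of `T` by `∼` is a category: composition
`[(e,u,f)]·[(g,v,k)] = [(e,u·v,k)]` (defined when `f L g`) is well defined and
associative, `[(e,e,e)]` is the identity at the `L`-class of `e`, and for fixed
idempotents `e, f` the map `u ↦ [(e,u,f)]` is a bijection from
`e·S·f = {u : eu = u = uf}` onto the morphisms from the `L`-class of `e` to the
`L`-class of `f` (i.e. the `∼`-classes of triples `(g,v,h)` with `g L e` and
`h L f`). -/
theorem LG_is_category {S : Type*} [Semigroup S]
    (hreg : ∀ a : S, ∃ b : S, a * b * a = a ∧ b * a * b = b) :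
    -- composition is well defined on `∼`-classes and lands in `T`
    (∀ e u f e₁ u₁ f₁ g v k g₁ v₁ k₁ : S,
      (e, u, f) ∈ TSet S → (e₁, u₁, f₁) ∈ TSet S →
      (g, v, k) ∈ TSet S → (g₁, v₁, k₁) ∈ TSet S →
      simRel (e, u, f) (e₁, u₁, f₁) → simRel (g, v, k) (g₁, v₁, k₁) →
      LRel f g →
      (e, u * v, k) ∈ TSet S ∧ simRel (e, u * v, k) (e₁, u₁ * v₁, k₁)) ∧
    -- composition is associative
    (∀ e u f g v k l w m : S,
      (e, u, f) ∈ TSet S → (g, v, k) ∈ TSet S → (l, w, m) ∈ TSet S →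
      LRel f g → LRel k l →
      simRel (e, (u * v) * w, m) (e, u * (v * w), m)) ∧
    -- `[(e,e,e)]` is a left and right identity
    (∀ e u f : S, (e, u, f) ∈ TSet S →
      simRel (e, e * u, f) (e, u, f) ∧ simRel (e, u * f, f) (e, u, f)) ∧
    -- bijection between `e·S·f` and the morphisms from `[e]_L` to `[f]_L`
    (∀ e f g v h : S, e * e = e → f * f = f →
      (g, v, h) ∈ TSet S → LRel g e → LRel h f →
      ∃! u : S, (e * u = u ∧ u * f = u) ∧ simRel (e, u, f) (g, v, h)) := by
  have hmem : ∀ e u f : S, (e, u, f) ∈ TSet S ↔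
      (e * e = e ∧ f * f = f ∧ e * u = u ∧ u * f = u) := by
    intro e u f; rfl
  refine ⟨?_, ?_, ?_, ?_⟩
  · rintro e u f e₁ u₁ f₁ g v k g₁ v₁ k₁ hT1 hT2 hT3 hT4 hs1 hs2 hfg
    rw [hmem] at hT1 hT3
    obtain ⟨he, hf, heu, huf⟩ := hT1
    obtain ⟨hg, hk, hgv, hvk⟩ := hT3
    obtain ⟨hLe, hLf, hu⟩ := hs1
    obtain ⟨hLg, hLk, hv⟩ := hs2
    simp only at hLe hLf hLg hLk hu hv
    have hug : u * g = u := by rw [← huf, mul_assoc, hfg.1]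
    refine ⟨(hmem _ _ _).2 ⟨he, hk, by rw [← mul_assoc, heu], by rw [mul_assoc, hvk]⟩,
      hLe, hLk, ?_⟩
    show u * v = e * (u₁ * v₁)
    rw [hv, ← mul_assoc, hug, hu, mul_assoc]
  · rintro e u f g v k l w m hT1 hT2 hT3 - -
    rw [hmem] at hT1 hT3
    obtain ⟨he, -, heu, -⟩ := hT1
    obtain ⟨-, hm, -, -⟩ := hT3
    refine ⟨⟨he, he⟩, ⟨hm, hm⟩, ?_⟩
    show u * v * w = e * (u * (v * w))
    conv_lhs => rw [mul_assoc, ← heu]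
    rw [mul_assoc]
  · rintro e u f hT
    rw [hmem] at hT
    obtain ⟨he, hf, heu, huf⟩ := hT
    exact ⟨⟨⟨he, he⟩, ⟨hf, hf⟩, rfl⟩, ⟨he, he⟩, ⟨hf, hf⟩, by show u * f = e * u; rw [huf, heu]⟩
  · rintro e f g v h he hf hT ⟨hge, heg⟩ ⟨hhf, hfh⟩
    rw [hmem] at hT
    obtain ⟨hg, hh, hgv, hvh⟩ := hT
    have hvf : v * f = v := by rw [← hvh, mul_assoc, hhf]
    refine ⟨e * v, ⟨⟨by rw [← mul_assoc, he], by rw [mul_assoc, hvf]⟩,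
      ⟨heg, hge⟩, ⟨hfh, hhf⟩, rfl⟩, ?_⟩
    rintro y ⟨-, -, -, hy⟩
    exact hy
end

section
/- In the category 𝓛_G built from a regular semigroup S, every inclusion splits: for idempotents e, f with e·f = e, the element f·e is idempotent, f·(f·e) = f·e, (f·e)·e = f·e, e·(f·e) = e, and the composite [(e,e,f)]·[(f, f·e, e)] equals the identity [(e,e,e)]; thus the retraction [(f, f·e, e)] is a right inverse of the inclusion [(e,e,f)]. -/
/-- Every inclusion in `𝓛_G` splits: for idempotents `e, f` with `e·f = e`,
the element `f·e` is idempotent, `f·(f·e) = f·e`, `(f·e)·e = f·e`,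
`e·(f·e) = e`, and the composite `[(e,e,f)]·[(f, f·e, e)] = [(e, e·(f·e), e)]`
equals the identity `[(e,e,e)]`; thus the retraction `[(f, f·e, e)]` is a right
inverse of the inclusion `[(e,e,f)]`. -/
theorem inclusions_split {S : Type*} [Semigroup S]
    (hreg : ∀ a : S, ∃ b : S, a * b * a = a ∧ b * a * b = b)
    (e f : S) (he : e * e = e) (hf : f * f = f) (hef : e * f = e) :
    (f * e) * (f * e) = f * e ∧
    f * (f * e) = f * e ∧ (f * e) * e = f * e ∧ e * (f * e) = e ∧
    simRel (e, e * (f * e), e) (e, e, e) := by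
  have h1 : (f * e) * (f * e) = f * e := by
    calc (f * e) * (f * e) = f * ((e * f) * e) := by simp [mul_assoc]
    _ = f * e := by rw [hef, he]
  have h4 : e * (f * e) = e := by
    rw [← mul_assoc, hef, he]
  refine ⟨h1, ?_, ?_, h4, ⟨⟨he, he⟩, ⟨he, he⟩, by rw [h4, he]⟩⟩
  · rw [← mul_assoc, hf]
  · rw [mul_assoc, he]
end

section
/- The pair (𝓛_G, 𝒫_L) built from a regular semigroup S is a category with subobjects: (i) every inclusion [(e,e,f)] (where e·f = e) is a monomorphism in 𝓛_G, i.e. if [(g,u,e)]·[(e,e,f)] = [(h,v,e)]·[(e,e,f)] then [(g,u,e)] = [(h,v,e)]; and (ii) if an inclusion factors as [(e,e,f)] = [(g,u,k)]·[(k,k,l)] with e·f = e and k·l = k, then u = g, so the first factor [(g,u,k)] = [(g,g,k)] is itself an inclusion. -/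
/-- `(𝓛_G, 𝒫_L)` is a category with subobjects: (i) every inclusion
`[(e,e,f)]` (with `e·f = e`) is a monomorphism, i.e. cancelling it on the right
of `[(g,u,e)]·[(e,e,f)] = [(h,v,e)]·[(e,e,f)]` gives `[(g,u,e)] = [(h,v,e)]`;
(ii) if an inclusion factors as `[(e,e,f)] = [(g,u,k)]·[(k,k,l)]` with
`e·f = e` and `k·l = k`, then `u = g`, so the first factor is itself an
inclusion. -/
theorem LG_category_with_subobjects {S : Type*} [Semigroup S]
    (hreg : ∀ a : S, ∃ b : S, a * b * a = a ∧ b * a * b = b) :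
    -- (i) inclusions are monomorphisms
    (∀ e f g h u v : S, e * e = e → f * f = f → g * g = g → h * h = h →
      e * f = e → (g, u, e) ∈ TSet S → (h, v, e) ∈ TSet S →
      simRel (g, u * e, f) (h, v * e, f) → simRel (g, u, e) (h, v, e)) ∧
    -- (ii) left factors of inclusions through inclusions are inclusions
    (∀ e f g k l u : S, e * e = e → f * f = f → g * g = g → k * k = k →
      l * l = l → e * f = e → k * l = k → (g, u, k) ∈ TSet S →
      simRel (e, e, f) (g, u * k, l) → u = g) := by
  constructor
  · rintro e f g h u v he hf hg hh hef ⟨-, -, -, hue⟩ ⟨-, -, -, hve⟩ ⟨hLgh, -, heq⟩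
    refine ⟨hLgh, ⟨he, he⟩, ?_⟩
    simp only at heq hue hve ⊢
    calc u = u * e := hue.symm
    _ = g * (v * e) := heq
    _ = g * v := by rw [hve]
  · rintro e f g k l u he hf hg hk hl hef hkl ⟨-, -, hgu, huk⟩ ⟨⟨heg, hge⟩, -, heq⟩
    simp only at heq hgu huk heg hge ⊢
    rw [huk] at heq
    have heu : e * u = e := heq.symm
    calc u = g * u := hgu.symm
    _ = g * e * u := by rw [hge]
    _ = g * e := by rw [mul_assoc, heu]
    _ = g := hge
end

section
/- Independence of the sandwich element: let S be a regular semigroup, let e, g, h be idempotents with e·h = h, h·g = h and g·h·e = g·e (so h is a sandwich element for the pair (g,e)), and let x ∈ S, x' ∈ V(x) with x·x' = e. Then h·e is idempotent and (g·h)·(h·e)·(h·e·x)·(x'·h·e·x) = g·x. Consequently the composite of the retraction [(g, g·h, h)], the E-chain isomorphism [(h, h·e, h·e)], the restriction isomorphism [(h·e, h·e·x, x'·h·e·x)] and the inclusion into the L-class of x'·x equals [(g, g·x, x'·x)], independently of the choice of the sandwich element h. -/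
/-- Independence of the sandwich element: let `e, g, h` be idempotents with
`e·h = h`, `h·g = h` and `g·h·e = g·e` (so `h` is a sandwich element for the
pair `(g,e)`), and let `x' ∈ V(x)` with `x·x' = e`.  Then `h·e` is idempotent
and `(g·h)·(h·e)·(h·e·x)·(x'·h·e·x) = g·x`; consequently the composite of the
retraction `[(g, g·h, h)]`, the E-chain isomorphism `[(h, h·e, h·e)]`, the
restriction isomorphism `[(h·e, h·e·x, x'·h·e·x)]` and the inclusion into the
`L`-class of `x'·x` equals `[(g, g·x, x'·x)]`, independently of the choice of
the sandwich element `h`. -/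
theorem sandwich_independence {S : Type*} [Semigroup S]
    (hreg : ∀ a : S, ∃ b : S, a * b * a = a ∧ b * a * b = b)
    (e g h x x' : S)
    (he : e * e = e) (hg : g * g = g) (hh : h * h = h)
    (heh : e * h = h) (hhg : h * g = h) (hghe : g * h * e = g * e)
    (hinv : x * x' * x = x ∧ x' * x * x' = x') (hxe : x * x' = e) :
    (h * e) * (h * e) = h * e ∧
    g * h * (h * e) * (h * e * x) * (x' * h * e * x) = g * x ∧
    simRel (g, g * h * (h * e) * (h * e * x) * (x' * h * e * x), x' * x)
      (g, g * x, x' * x) := by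
  obtain ⟨hxx'x, hx'xx'⟩ := hinv
  have hex : e * x = x := by rw [← hxe, hxx'x]
  have hidem : (h * e) * (h * e) = h * e := by
    have : h * e * h = h := by
      rw [mul_assoc, heh, hh]
    rw [← mul_assoc, this]
  have key : g * h * (h * e) * (h * e * x) * (x' * h * e * x) = g * x := by
    have h1 : g * h * (h * e) = g * e := by
      rw [← mul_assoc, mul_assoc g h h, hh, hghe]
    have h2 : g * e * (h * e * x) = g * h * x := by
      calc g * e * (h * e * x) = g * (e * h) * (e * x) := by
            simp only [mul_assoc]
        _ = g * h * x := by rw [heh, hex, mul_assoc]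
    have h3 : g * h * x * (x' * h * e * x) = g * x := by
      calc g * h * x * (x' * h * e * x)
          = g * h * (x * x') * (h * (e * x)) := by simp only [mul_assoc]
        _ = g * (h * (e * h)) * (e * x) := by rw [hxe]; simp only [mul_assoc]
        _ = g * h * e * x := by rw [heh, hh]; simp only [mul_assoc]
        _ = g * x := by rw [hghe, mul_assoc, hex]
    rw [h1, h2, h3]
  refine ⟨hidem, key, ⟨hg, hg⟩, ?_, ?_⟩
  · have : x' * x * (x' * x) = x' * x := by
      rw [mul_assoc, ← mul_assoc x x' x, hxx'x]
    exact ⟨this, this⟩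
  · show g * h * (h * e) * (h * e * x) * (x' * h * e * x) = g * (g * x)
    rw [key, ← mul_assoc, hg]
end

section
/- Principal cones in 𝓛_G: let S be a regular semigroup, x ∈ S, x' ∈ V(x), e = x·x', f = x'·x. The assignment sending the L-class of an idempotent g to the morphism [(g, g·x, f)] is a normal cone with apex the L-class of f: (i) it is well defined, i.e. if g L g₁ then (g, g·x, f) ∼ (g₁, g₁·x, f); (ii) g·(g·x) = g·x and (g·x)·f = g·x, so (g, g·x, f) ∈ T; (iii) it is compatible with inclusions: if g'·g = g' then [(g', g', g)]·[(g, g·x, f)] = [(g', g'·x, f)]; and (iv) its component at the L-class of e is an isomorphism, namely [(e, x, f)] with inverse [(f, x', e)] (since x·x' = e and x'·x = f). -/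
/-- Principal cones in `𝓛_G`: for `x' ∈ V(x)`, `e = x·x'`, `f = x'·x`, the
assignment sending the `L`-class of an idempotent `g` to `[(g, g·x, f)]` is a
normal cone with apex the `L`-class of `f`:
(i) it is well defined on `L`-classes;
(ii) `g·(g·x) = g·x` and `(g·x)·f = g·x`, so `(g, g·x, f) ∈ T`;
(iii) it is compatible with inclusions:
`[(g', g', g)]·[(g, g·x, f)] = [(g', g'·x, f)]` when `g'·g = g'`;
(iv) its component at the `L`-class of `e` is the isomorphism `[(e, x, f)]`
with inverse `[(f, x', e)]`. -/
theorem principal_cone {S : Type*} [Semigroup S]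
    (hreg : ∀ a : S, ∃ b : S, a * b * a = a ∧ b * a * b = b)
    (x x' : S) (hinv : x * x' * x = x ∧ x' * x * x' = x') :
    -- (i) well defined
    (∀ g g₁ : S, g * g = g → g₁ * g₁ = g₁ → LRel g g₁ →
      simRel (g, g * x, x' * x) (g₁, g₁ * x, x' * x)) ∧
    -- (ii) the components are genuine triples in `T`
    (∀ g : S, g * g = g →
      g * (g * x) = g * x ∧ (g * x) * (x' * x) = g * x) ∧
    -- (iii) compatibility with inclusions
    (∀ g g' : S, g * g = g → g' * g' = g' → g' * g = g' →
      simRel (g', g' * (g * x), x' * x) (g', g' * x, x' * x)) ∧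
    -- (iv) the component at the `L`-class of `e = x·x'` is the isomorphism
    -- `[(e, x, f)]` with inverse `[(f, x', e)]`
    ((x * x') * x = x ∧ x * (x' * x) = x ∧
      (x' * x) * x' = x' ∧ x' * (x * x') = x') := by
  obtain ⟨h1, h2⟩ := hinv
  have hff : (x' * x) * (x' * x) = x' * x := by
    conv_lhs => rw [mul_assoc, ← mul_assoc x x' x, h1]
  refine ⟨?_, ?_, ?_, ?_⟩
  · rintro g g₁ hg hg₁ ⟨hgg₁, hg₁g⟩
    exact ⟨⟨hgg₁, hg₁g⟩, ⟨hff, hff⟩, by rw [← mul_assoc, hgg₁]⟩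
  · intro g hg
    refine ⟨by rw [← mul_assoc, hg], ?_⟩
    rw [mul_assoc, ← mul_assoc x x' x, h1]
  · intro g g' hg hg' hg'g
    refine ⟨⟨hg', hg'⟩, ⟨hff, hff⟩, ?_⟩
    rw [← mul_assoc, hg'g, ← mul_assoc, hg']
  · refine ⟨h1, by rw [← mul_assoc, h1], ?_, ?_⟩
    · exact h2
    · rw [← mul_assoc]; exact h2
end

section
/- Translation characterization of morphism equality (well-definedness and faithfulness of the functor 𝔏 : 𝓛_G → 𝓛_S): let S be a regular semigroup, e, f, g, h idempotents with e L g and f L h, and let u, v ∈ S with e·u = u = u·f and g·v = v = v·h. Then u = e·v if and only if s·u = s·v for every s in the principal left ideal Se = {t·e : t ∈ S}; that is, (e,u,f) ∼ (g,v,h) exactly when the right-translation maps ρ_u and ρ_v agree on Se = Sg. -/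
/-- Translation characterization of morphism equality (well-definedness and
faithfulness of the functor `𝔏 : 𝓛_G → 𝓛_S`): for idempotents `e, f, g, h`
with `e L g` and `f L h`, and `u, v` with `e·u = u = u·f`, `g·v = v = v·h`,
one has `u = e·v` if and only if `s·u = s·v` for every `s` in the principal
left ideal `Se = {t·e : t ∈ S}`; that is, `(e,u,f) ∼ (g,v,h)` exactly when the
right translations `ρ_u` and `ρ_v` agree on `Se = Sg`. -/
theorem translation_characterization {S : Type*} [Semigroup S]
    (hreg : ∀ a : S, ∃ b : S, a * b * a = a ∧ b * a * b = b)
    (e f g h u v : S)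
    (he : e * e = e) (hf : f * f = f) (hg : g * g = g) (hh : h * h = h)
    (heg : LRel e g) (hfh : LRel f h)
    (heu : e * u = u) (huf : u * f = u)
    (hgv : g * v = v) (hvh : v * h = v) :
    u = e * v ↔ ∀ s : S, (∃ t : S, t * e = s) → s * u = s * v := by
  constructor
  · rintro rfl s ⟨t, rfl⟩
    rw [mul_assoc t e (e * v), ← mul_assoc e e v, he, mul_assoc]
  · intro hs
    have := hs e ⟨e, he⟩
    rw [← this, heu]
end
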